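/- Define polynomials D(n) ∈ ℤ[x] by D(0)=1, D(1)=2x, D(2)=2x+x², D(3)=2x+2x², D(4)=x+4x²+x³, D(5)=5x²+4x³+x⁴, and D(n)=x·D(n−1)+x·D(n−2)+(x−x²)·D(n−3) for n ≥ 6. Then for all n ≥ 3, D(n)(1) = 2·F(n), where F is the Fibonacci sequence. -/
import Mathlib


open Polynomial

noncomputable def D : ℕ → Polynomial ℤ
  | 0 => 1
  | 1 => 2 * X
  | 2 => 2 * X + X ^ 2
  | 3 => 2 * X + 2 * X ^ 2
  | 4 => X + 4 * X ^ 2 + X ^ 3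
  | 5 => 5 * X ^ 2 + 4 * X ^ 3 + X ^ 4
  | (n + 6) => X * D (n + 5) + X * D (n + 4) + (X - X ^ 2) * D (n + 3)

lemma D_eval_one_aux : ∀ n : ℕ, (D (n + 3)).eval 1 = 2 * (Nat.fib (n + 3) : ℤ) := by
  intro n
  induction n using Nat.strong_induction_on with
  | _ n ih =>
    match n with
    | 0 => simp [D, Nat.fib]
    | 1 => simp [D]; norm_num [Nat.fib]
    | 2 => simp [D]; norm_num [Nat.fib]
    | (m + 3) =>
      have h1 := ih (m + 2) (by omega)
      have h2 := ih (m + 1) (by omega)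
      show (D (m + 6)).eval 1 = _
      rw [show m + 6 = m + 6 from rfl]
      simp only [D, eval_add, eval_mul, eval_sub, eval_pow, eval_X]
      have : m + 2 + 3 = m + 5 := by omega
      rw [this] at h1
      have : m + 1 + 3 = m + 4 := by omega
      rw [this] at h2
      rw [h1, h2]
      have hf : Nat.fib (m + 6) = Nat.fib (m + 4) + Nat.fib (m + 5) :=
        Nat.fib_add_two
      rw [show m + 3 + 3 = m + 6 from rfl, hf]
      push_cast
      ring

theorem D_eval_one (n : ℕ) (hn : 3 ≤ n) :
    (D n).eval 1 = 2 * (Nat.fib n : ℤ) := by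
  obtain ⟨m, rfl⟩ := Nat.exists_eq_add_of_le hn
  rw [Nat.add_comm]
  exact D_eval_one_aux m
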